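/- Let K be a field of characteristic zero, A a commutative K-algebra, and δ a locally nilpotent K-E-derivation of A. If e is an idempotent of A lying in the image of δ, then the ideal of A generated by e is contained in the image of δ. -/

import Mathlib

set_option linter.unusedSectionVars false

section Aux

variable {K : Type*} [Field K] [CharZero K]
variable {A : Type*} [NonUnitalCommRing A] [Module K A] [SMulCommClass K A A] [IsScalarTower K A A]

/-- Product rule for E-derivations. -/
theorem Ederiv_mul (δ : A →ₗ[K] A) (φ : A →ₙₐ[K] A) (hφ : ∀ a : A, δ a = a - φ a)
    (a b : A) : δ (a * b) = δ a * b + φ a * δ b := by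
  rw [hφ, hφ, hφ, map_mul, sub_mul, mul_sub]
  abel

/-- A polynomial over a `K`-algebra vanishing at all naturals is zero. -/
theorem poly_eq_zero_of_eval_nat {B : Type*} [CommRing B] [Algebra K B]
    (Q : Polynomial B) (h : ∀ k : ℕ, Q.eval (k : B) = 0) : Q = 0 := by
  ext n
  rw [Polynomial.coeff_zero]
  rw [← Module.forall_dual_apply_eq_zero_iff K (Q.coeff n)]
  intro lam
  set N := Q.natDegree + 1 with hN
  set q : Polynomial K := ∑ i ∈ Finset.range N, Polynomial.C (lam (Q.coeff i)) * Polynomial.X ^ i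
    with hq
  have hqeval : ∀ k : ℕ, q.eval (k : K) = 0 := by
    intro k
    have hQe : Q.eval ((k : ℕ) : B) = ∑ i ∈ Finset.range N, ((k : K) ^ i) • Q.coeff i := by
      rw [Polynomial.eval_eq_sum_range]
      refine Finset.sum_congr rfl fun i _ => ?_
      have : ((k : ℕ) : B) = algebraMap K B ((k : ℕ) : K) := by
        simp
      rw [this, ← map_pow, Algebra.smul_def, mul_comm]
    have := congrArg lam (h k)
    rw [hQe, map_sum, map_zero] at this
    rw [hq, Polynomial.eval_finset_sum]
    rw [← this]
    refine Finset.sum_congr rfl fun i _ => ?_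
    rw [map_smul, smul_eq_mul, Polynomial.eval_mul, Polynomial.eval_C, Polynomial.eval_pow,
      Polynomial.eval_X, mul_comm]
  have hq0 : q = 0 := by
    apply Polynomial.eq_zero_of_infinite_isRoot
    apply Set.infinite_of_injective_forall_mem (f := fun k : ℕ => (k : K))
    · exact Nat.cast_injective
    · exact fun k => hqeval k
  by_cases hn : n < N
  · have : q.coeff n = lam (Q.coeff n) := by
      rw [hq, Polynomial.finset_sum_coeff]
      rw [Finset.sum_eq_single n]
      · simp
      · intro i _ hi
        simp [Polynomial.coeff_C_mul, Polynomial.coeff_X_pow, Ne.symm hi]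
      · intro hcon
        exact absurd (Finset.mem_range.mpr hn) hcon
    rw [← this, hq0, Polynomial.coeff_zero]
  · have : Q.coeff n = 0 := Polynomial.coeff_eq_zero_of_natDegree_lt (by omega)
    rw [this, map_zero]

theorem Ederiv_idem_ker (δ : A →ₗ[K] A) (φ : A →ₙₐ[K] A) (hφ : ∀ a : A, δ a = a - φ a)
    (hLN : ∀ a : A, ∃ m : ℕ, 1 ≤ m ∧ (δ ^ m) a = 0)
    (e : A) (hidem : e * e = e) : δ e = 0 := by
  obtain ⟨m, hm1, hme⟩ := hLN e
  suffices hfe : φ e = e by rw [hφ, hfe, sub_self]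
  set B := Unitization K A with hB
  set F : B →ₐ[K] B := Unitization.lift ((Unitization.inrNonUnitalAlgHom K A).comp φ) with hF
  have hFa : ∀ a : A, F (a : B) = ((φ a : A) : B) := by
    intro a
    rw [hF]
    show Unitization.lift ((Unitization.inrNonUnitalAlgHom K A).comp φ) (Unitization.inr a) = _
    rw [Unitization.lift_apply]
    simp
  set Fl : B →ₗ[K] B := F.toLinearMap with hFl
  have hFla : ∀ x : B, Fl x = F x := fun _ => rfl
  set D : B →ₗ[K] B := LinearMap.id - Fl with hD
  have hDa : ∀ a : A, D (a : B) = ((δ a : A) : B) := by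
    intro a
    rw [hD, LinearMap.sub_apply, LinearMap.id_apply, hFla, hFa, hφ a, Unitization.inr_sub]
  have hDpow : ∀ (i : ℕ) (a : A), (D ^ i) (a : B) = (((δ ^ i) a : A) : B) := by
    intro i
    induction i with
    | zero => intro a; simp
    | succ i ih =>
      intro a
      rw [pow_succ, Module.End.mul_apply, hDa, ih, pow_succ, Module.End.mul_apply]
  -- the binomial expansion of `Fl ^ k`
  have hFlD : Fl = 1 - D := by
    rw [hD, ← Module.End.one_eq_id, sub_sub_cancel]
  have hbin : ∀ k : ℕ, (Fl ^ k) (e : B)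
      = ∑ i ∈ Finset.range (k + 1), ((-1 : K) ^ i * (k.choose i : K)) • (((δ ^ i) e : A) : B) := by
    intro k
    have h1 : Fl ^ k = ∑ i ∈ Finset.range (k + 1),
        ((-1 : K) ^ i * (k.choose i : K)) • (D ^ i) := by
      rw [hFlD, ← neg_add_eq_sub, (Commute.one_right (-D)).add_pow k]
      refine Finset.sum_congr rfl fun i _ => ?_
      have hterm : (-D) ^ i * ((k.choose i : ℕ) : Module.End K B)
          = ((-1 : K) ^ i * (k.choose i : K)) • D ^ i := by
        rw [← neg_one_smul K D, smul_pow, smul_mul_assoc,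
          ← (Nat.cast_commute (k.choose i) (D ^ i)).eq, ← nsmul_eq_mul,
          ← Nat.cast_smul_eq_nsmul K, smul_smul]
      rw [one_pow, mul_one, hterm]
    rw [h1, LinearMap.sum_apply]
    refine Finset.sum_congr rfl fun i _ => ?_
    rw [LinearMap.smul_apply, hDpow]
  -- the interpolating polynomial
  set c : ℕ → B := fun i => (((-1 : K) ^ i * ((i.factorial : K))⁻¹) • (((δ ^ i) e : A) : B)) with hc
  set P : Polynomial B := ∑ i ∈ Finset.range m, Polynomial.C (c i) * descPochhammer B i with hP
  have hzero : ∀ i : ℕ, m ≤ i → (((δ ^ i) e : A) : B) = 0 := by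
    intro i hi
    obtain ⟨j, rfl⟩ : ∃ j, i = j + m := ⟨i - m, by omega⟩
    rw [pow_add, Module.End.mul_apply, hme, map_zero, Unitization.inr_zero]
  have hPeval : ∀ k : ℕ, P.eval (k : B) = (Fl ^ k) (e : B) := by
    intro k
    have hL : P.eval (k : B) = ∑ i ∈ Finset.range m,
        ((-1 : K) ^ i * (k.choose i : K)) • (((δ ^ i) e : A) : B) := by
      rw [hP, Polynomial.eval_finset_sum]
      refine Finset.sum_congr rfl fun i _ => ?_
      rw [Polynomial.eval_mul, Polynomial.eval_C, descPochhammer_eval_eq_descFactorial, hc]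
      rw [smul_mul_assoc, ← (Nat.cast_commute (k.descFactorial i) _).eq, ← nsmul_eq_mul,
        ← Nat.cast_smul_eq_nsmul K, smul_smul]
      congr 1
      have hfac : ((i.factorial : ℕ) : K) ≠ 0 := Nat.cast_ne_zero.mpr i.factorial_ne_zero
      rw [Nat.descFactorial_eq_factorial_mul_choose, Nat.cast_mul]
      field_simp
    rw [hL, hbin k]
    rw [Finset.sum_subset (Finset.range_subset_range.mpr (show m ≤ k + m + 1 by omega))
      (fun i _ hni => by rw [hzero i (by simpa using hni), smul_zero]),
      Finset.sum_subset (Finset.range_subset_range.mpr (show k + 1 ≤ k + m + 1 by omega))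
      (fun i _ hni => by
        rw [Nat.choose_eq_zero_of_lt (by simpa using hni), Nat.cast_zero, mul_zero, zero_smul])]
  have hidemB : ∀ k : ℕ, (Fl ^ k) (e : B) * (Fl ^ k) (e : B) = (Fl ^ k) (e : B) := by
    intro k
    induction k with
    | zero =>
      rw [pow_zero, Module.End.one_apply, ← Unitization.inr_mul, hidem]
    | succ k ih =>
      rw [pow_succ', Module.End.mul_apply, hFla, ← map_mul, ih]
  have hPP : P * P = P := by
    rw [← sub_eq_zero]
    apply poly_eq_zero_of_eval_nat (K := K)
    intro k
    rw [Polynomial.eval_sub, Polynomial.eval_mul, hPeval, hidemB, sub_self]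
  have hP' : Polynomial.derivative P = 0 := by
    have hd := congrArg Polynomial.derivative hPP
    rw [Polynomial.derivative_mul, mul_comm (Polynomial.derivative P) P] at hd
    -- hd : P * P' + P * P' = P'
    set R : Polynomial B := P * Polynomial.derivative P with hR
    have hPR : P * R = R := by
      rw [hR, ← mul_assoc, hPP]
    have hRR : R = R + R := by
      conv_lhs => rw [hR, ← hd]
      rw [mul_add, hPR]
    have hR0 : R = 0 := by
      have := hRR.symm
      rwa [add_eq_left] at this
    rw [← hd, hR0, add_zero]
  have hcoeff : ∀ n : ℕ, P.coeff (n + 1) = 0 := by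
    intro n
    have h1 : P.coeff (n + 1) * ((n : B) + 1) = 0 := by
      rw [← Polynomial.coeff_derivative, hP', Polynomial.coeff_zero]
    have h2 : (((n : K)) + 1) • P.coeff (n + 1) = 0 := by
      have hmapa : algebraMap K B ((n : K) + 1) = (n : B) + 1 := by
        rw [map_add, map_one, map_natCast]
      rw [Algebra.smul_def, hmapa, mul_comm]
      exact h1
    have h3 : ((((n : K)) + 1)⁻¹ * (((n : K)) + 1)) • P.coeff (n + 1) = 0 := by
      rw [mul_smul, h2, smul_zero]
    rwa [inv_mul_cancel₀ (Nat.cast_add_one_ne_zero n), one_smul] at h3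
  have hPC : P = Polynomial.C (P.coeff 0) := by
    apply Polynomial.ext
    intro n
    cases n with
    | zero => simp
    | succ n => rw [hcoeff n, Polynomial.coeff_C]; simp
  have h01 : (Fl ^ 1) (e : B) = (Fl ^ 0) (e : B) := by
    rw [← hPeval 1, ← hPeval 0, hPC]
    simp
  rw [pow_one, pow_zero, Module.End.one_apply, hFla, hFa] at h01
  exact Unitization.inr_injective h01

theorem Ederiv_unit_image (δ : A →ₗ[K] A) (φ : A →ₙₐ[K] A) (hφ : ∀ a : A, δ a = a - φ a)
    (hLN : ∀ a : A, ∃ m : ℕ, 1 ≤ m ∧ (δ ^ m) a = 0)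
    (e : A) (hidem : e * e = e) (hδe : δ e = 0) (b : A) (hb : δ b = e) (a : A) :
    ∃ y : A, δ y = e * a := by
  have hφe : φ e = e := by
    have h := hφ e
    rw [hδe, eq_comm, sub_eq_zero, eq_comm] at h
    exact h
  have hmul : ∀ x y : A, δ (x * y) = δ x * y + φ x * δ y := Ederiv_mul δ φ hφ
  have hemul : ∀ x : A, δ (e * x) = e * δ x := by
    intro x; rw [hmul, hδe, zero_mul, zero_add, hφe]
  set c : A := e * b with hc
  have hδc : δ c = e := by rw [hc, hemul, hb, hidem]
  have hec : e * c = c := by rw [hc, ← mul_assoc, hidem]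
  have hφc : φ c = c - e := by
    have h := hφ c
    rw [hδc] at h
    rw [eq_sub_iff_add_eq] at h
    rw [eq_sub_iff_add_eq, add_comm]
    exact h
  -- the chain of divided powers of `c`
  set u : ℕ → A := fun j =>
    Nat.rec e (fun j uj => ((j : K) + 1)⁻¹ • (uj * (c - (j : K) • e))) j with hu
  have hu0 : u 0 = e := rfl
  have husucc : ∀ j : ℕ, u (j + 1) = ((j : K) + 1)⁻¹ • (u j * (c - (j : K) • e)) :=
    fun j => rfl
  have hze : ∀ j : ℕ, (c - (j : K) • e) * e = c - (j : K) • e := by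
    intro j
    rw [sub_mul, smul_mul_assoc, hidem, mul_comm, hec]
  have hue : ∀ j : ℕ, u j * e = u j := by
    intro j
    cases j with
    | zero => exact hidem
    | succ j => rw [husucc, smul_mul_assoc, mul_assoc, hze]
  have hφu : ∀ j : ℕ, φ (u (j + 1)) = ((j : K) + 1)⁻¹ • (φ (u j) * (c - ((j : K) + 1) • e)) := by
    intro j
    rw [husucc, map_smul, map_mul, map_sub, hφc, map_smul, hφe]
    congr 2
    rw [sub_sub, add_smul, one_smul, add_comm ((j:K) • e) e]
  have hδz : ∀ t : K, δ (c - t • e) = e := by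
    intro t
    rw [map_sub, map_smul, hδc, hδe, smul_zero, sub_zero]
  have hφue : ∀ j : ℕ, φ (u j) * e = φ (u j) := by
    intro j
    have h := congrArg φ (hue j)
    rw [map_mul, hφe] at h
    exact h
  have hδu : ∀ j : ℕ, δ (u (j + 1)) = φ (u j) := by
    intro j
    induction j with
    | zero =>
      have h1 : u 1 = c := by
        have h := husucc 0
        rw [hu0] at h
        simpa [hec] using h
      show δ (u 1) = φ (u 0)
      rw [h1, hδc, hu0, hφe]
    | succ j ih =>
      have hz : φ (u j) * (c - ((j : K) + 1) • e) = ((j : K) + 1) • φ (u (j + 1)) := by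
        have h := congrArg (fun y => ((j : K) + 1) • y) (hφu j)
        rw [smul_smul, mul_inv_cancel₀ (Nat.cast_add_one_ne_zero j), one_smul] at h
        exact h.symm
      have hne : ((j : K) + 1 + 1) ≠ 0 := by
        have h2 := Nat.cast_add_one_ne_zero (R := K) (j + 1)
        push_cast at h2
        exact h2
      rw [husucc (j + 1), map_smul, hmul, ih, hδz, Nat.cast_succ, hz, hφue (j + 1)]
      have hcomb : ((j : K) + 1) • φ (u (j + 1)) + φ (u (j + 1))
          = ((j : K) + 1 + 1) • φ (u (j + 1)) := by
        module
      rw [hcomb, smul_smul, inv_mul_cancel₀ hne, one_smul]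
  obtain ⟨M, hM1, hMx⟩ := hLN (e * a)
  refine ⟨∑ k ∈ Finset.range M, (-1 : K) ^ k • (u (k + 1) * (δ ^ k) (e * a)), ?_⟩
  rw [map_sum]
  have hterm : ∀ k : ℕ, δ ((-1 : K) ^ k • (u (k + 1) * (δ ^ k) (e * a)))
      = (fun k => (-1 : K) ^ k • (φ (u k) * (δ ^ k) (e * a))) k
        - (fun k => (-1 : K) ^ k • (φ (u k) * (δ ^ k) (e * a))) (k + 1) := by
    intro k
    simp only
    rw [map_smul, hmul, hδu k, smul_add, sub_eq_add_neg]
    congr 1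
    have hps : (δ ^ (k + 1)) (e * a) = δ ((δ ^ k) (e * a)) := by
      rw [pow_succ', Module.End.mul_apply]
    rw [hps, pow_succ, mul_smul, neg_one_smul, smul_neg, neg_neg]
  rw [Finset.sum_congr rfl (fun k _ => hterm k), Finset.sum_range_sub']
  have hf0 : (-1 : K) ^ 0 • (φ (u 0) * (δ ^ 0) (e * a)) = e * a := by
    rw [pow_zero, one_smul, hu0, hφe, pow_zero, Module.End.one_apply, ← mul_assoc, hidem]
  have hfM : (-1 : K) ^ M • (φ (u M) * (δ ^ M) (e * a)) = 0 := by
    rw [hMx, mul_zero, smul_zero]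
  rw [hf0, hfM, sub_zero]

end Aux


/-- Let `K` be a field of characteristic zero, `A` a commutative
`K`-algebra, and `δ` a locally nilpotent `K`-`E`-derivation of `A`.  If `e` is an
idempotent of `A` lying in the image of `δ`, then the ideal of `A` generated by `e` is
contained in the image of `δ`. -/
theorem image_of_locally_nilpotent_Ederivation_contains_ideal_of_idempotent_comm
    {K : Type*} [Field K] [CharZero K]
    {A : Type*} [NonUnitalCommRing A] [Module K A] [SMulCommClass K A A] [IsScalarTower K A A]
    (δ : A →ₗ[K] A)
    (hEder : ∃ φ : A →ₙₐ[K] A, ∀ a : A, δ a = a - φ a)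
    (hLN : ∀ a : A, ∃ m : ℕ, 1 ≤ m ∧ (δ ^ m) a = 0)
    (e : A) (hidem : e * e = e) (him : e ∈ LinearMap.range δ) :
    ∀ x ∈ TwoSidedIdeal.span {e}, x ∈ LinearMap.range δ := by
  obtain ⟨φ, hφ⟩ := hEder
  obtain ⟨b, hb⟩ := him
  have hδe : δ e = 0 := Ederiv_idem_ker δ φ hφ hLN e hidem
  intro x hx
  have hex : e * x = x := by
    set I : TwoSidedIdeal A := TwoSidedIdeal.mk' {y : A | e * y = y}
      (by simp)
      (fun {y z} hy hz => by
        simp only [Set.mem_setOf_eq] at *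
        rw [mul_add, hy, hz])
      (fun {y} hy => by
        simp only [Set.mem_setOf_eq] at *
        rw [mul_neg, hy])
      (fun {y z} hz => by
        simp only [Set.mem_setOf_eq] at *
        rw [mul_left_comm, hz])
      (fun {y z} hy => by
        simp only [Set.mem_setOf_eq] at *
        rw [← mul_assoc, hy]) with hI
    have hsub : {e} ⊆ (I : Set A) := by
      intro y hy
      rw [Set.mem_singleton_iff] at hy
      subst hy
      show y ∈ I
      rw [hI, TwoSidedIdeal.mem_mk']
      exact hidem
    have := TwoSidedIdeal.mem_span_iff.mp hx I (fun y hy => hsub hy)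
    rw [hI, TwoSidedIdeal.mem_mk'] at this
    exact this
  obtain ⟨y, hy⟩ := Ederiv_unit_image δ φ hφ hLN e hidem hδe b hb x
  exact ⟨y, by rw [hy, hex]⟩
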